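/- Let u solve (1/2)σ² u''(y) − θ y u'(y) = −1 on (a, b) with u(a) = u(b) = 0 (a < b, σ > 0, θ > 0). Then u(y) > 0 for all y ∈ (a, b). -/

import Mathlib

/-- No interior local minimum for a solution of the ODE. -/
lemma no_interior_min_fpt (a b σ θ : ℝ) (hab : a < b) (hσ : 0 < σ)
    (u : ℝ → ℝ) (hC2 : ContDiffOn ℝ 2 u (Set.Icc a b))
    (hODE : ∀ y ∈ Set.Ioo a b,
      (1 / 2) * σ ^ 2 * deriv (deriv u) y - θ * y * deriv u y = -1)
    (c : ℝ) (hc : c ∈ Set.Ioo a b) (hmin : IsMinOn u (Set.Icc a b) c) : False := by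
  have hIoo : Set.Ioo a b ∈ nhds c := Ioo_mem_nhds hc.1 hc.2
  have hloc : IsLocalMin u c :=
    hmin.isLocalMin (Filter.mem_of_superset hIoo Set.Ioo_subset_Icc_self)
  have hd0 : deriv u c = 0 := hloc.deriv_eq_zero
  have hode := hODE c hc
  rw [hd0] at hode
  have hσ2 : (0:ℝ) < σ ^ 2 := by positivity
  have hdd : deriv (deriv u) c < 0 := by nlinarith
  have hC2' : ContDiffOn ℝ 2 u (Set.Ioo a b) := hC2.mono Set.Ioo_subset_Icc_self
  have hC1d : ContDiffOn ℝ 1 (deriv u) (Set.Ioo a b) :=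
    hC2'.deriv_of_isOpen isOpen_Ioo (by norm_num)
  have hdiff : DifferentiableAt ℝ (deriv u) c :=
    ((hC1d.differentiableOn one_ne_zero) c hc).differentiableAt hIoo
  have hder : HasDerivAt (deriv u) (deriv (deriv u) c) c := hdiff.hasDerivAt
  rw [hasDerivAt_iff_tendsto_slope] at hder
  have hev : ∀ᶠ x in nhdsWithin c {c}ᶜ, slope (deriv u) c x < 0 :=
    hder.eventually_lt_const hdd
  have hmem : ∀ᶠ x in nhdsWithin c {c}ᶜ, x ∈ Set.Ioo a b :=
    Filter.Eventually.filter_mono nhdsWithin_le_nhds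
      (Filter.eventually_iff_exists_mem.mpr ⟨Set.Ioo a b, hIoo, fun x hx => hx⟩)
  have hev2 : ∀ᶠ x in nhdsWithin c (Set.Iio c),
      slope (deriv u) c x < 0 ∧ x ∈ Set.Ioo a b :=
    (hev.and hmem).filter_mono
      (nhdsWithin_mono c (fun x hx => Set.mem_compl_singleton_iff.mpr (ne_of_lt hx)))
  obtain ⟨l, hl, hsub⟩ := mem_nhdsLT_iff_exists_Ioo_subset.mp hev2
  -- deriv u > 0 on Ioo l c
  have hpos : ∀ x ∈ Set.Ioo l c, 0 < deriv u x := by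
    intro x hx
    obtain ⟨hslope, hxab⟩ := hsub hx
    rw [slope_def_field, hd0] at hslope
    have hxc : x - c < 0 := sub_neg.mpr hx.2
    rcases div_neg_iff.mp hslope with ⟨h1, h2⟩ | ⟨h1, h2⟩ <;> linarith
  set p : ℝ := (l + c) / 2 with hp
  have hpl : l < p := by simp only [hp]; linarith [Set.mem_Iio.mp hl]
  have hpc : p < c := by simp only [hp]; linarith [Set.mem_Iio.mp hl]
  have hpab : p ∈ Set.Ioo a b := (hsub ⟨hpl, hpc⟩).2
  have hIccsub : Set.Icc p c ⊆ Set.Icc a b := by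
    apply Set.Icc_subset_Icc (le_of_lt hpab.1) (le_of_lt hc.2)
  have hmono : StrictMonoOn u (Set.Icc p c) := by
    apply strictMonoOn_of_deriv_pos (convex_Icc p c) (hC2.continuousOn.mono hIccsub)
    intro x hx
    rw [interior_Icc] at hx
    exact hpos x ⟨lt_trans hpl hx.1, hx.2⟩
  have hlt : u p < u c :=
    hmono ⟨le_rfl, le_of_lt hpc⟩ ⟨le_of_lt hpc, le_rfl⟩ hpc
  have := hmin (hIccsub ⟨le_rfl, le_of_lt hpc⟩)
  exact absurd this (not_le.mpr hlt)

/-- if `u` is `C²` on `[a,b]` and solves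
`(1/2)σ² u''(y) − θ y u'(y) = −1` on `(a,b)` with `u(a) = u(b) = 0`
(`a < b`, `σ > 0`, `θ > 0`), then `u(y) > 0` for all `y ∈ (a,b)`. -/
theorem mean_fpt_solution_positive (a b σ θ : ℝ) (hab : a < b) (hσ : 0 < σ) (hθ : 0 < θ)
    (u : ℝ → ℝ) (hC2 : ContDiffOn ℝ 2 u (Set.Icc a b))
    (hODE : ∀ y ∈ Set.Ioo a b,
      (1 / 2) * σ ^ 2 * deriv (deriv u) y - θ * y * deriv u y = -1)
    (hua : u a = 0) (hub : u b = 0) :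
    ∀ y ∈ Set.Ioo a b, 0 < u y := by
  intro y hy
  by_contra hle
  push_neg at hle
  have hcont : ContinuousOn u (Set.Icc a b) := hC2.continuousOn
  obtain ⟨c, hcmem, hmin⟩ :=
    isCompact_Icc.exists_isMinOn (Set.nonempty_Icc.mpr hab.le) hcont
  have hyIcc : y ∈ Set.Icc a b := Set.Ioo_subset_Icc_self hy
  have hucy : u c ≤ u y := hmin hyIcc
  rcases lt_or_eq_of_le (hucy.trans hle) with huc | huc
  · -- u c < 0, so c is interior
    have hca : c ≠ a := fun h => by rw [h, hua] at huc; exact absurd huc (lt_irrefl 0)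
    have hcb : c ≠ b := fun h => by rw [h, hub] at huc; exact absurd huc (lt_irrefl 0)
    have hcIoo : c ∈ Set.Ioo a b :=
      ⟨lt_of_le_of_ne hcmem.1 (Ne.symm hca), lt_of_le_of_ne hcmem.2 hcb⟩
    exact absurd (no_interior_min_fpt a b σ θ hab hσ u hC2 hODE c hcIoo hmin) id
  · -- u c = 0, so y is itself a min point
    have huy : u y = 0 := le_antisymm hle (huc ▸ hucy)
    have hminy : IsMinOn u (Set.Icc a b) y := by
      intro x hx
      calc u y = u c := by rw [huy, huc]
        _ ≤ u x := hmin hx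
    exact absurd (no_interior_min_fpt a b σ θ hab hσ u hC2 hODE y hy hminy) id
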